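/- Let p ∈ (2, 3) and set ψ_p(σ) := σ^p − 1 − p(σ − 1), ψ_3(σ) := σ³ − 1 − 3(σ − 1), and C_p := 4/(2^p − 1 − p). Then: (1) ψ_p(σ) ≤ ψ_3(σ) for all σ ≥ 0; (2) ψ_3(σ) ≤ C_p ψ_p(σ) for all σ ∈ [0, 2]. Consequently, if f(t) solves the ODE df/dt = λ A f on ℝ² with λ > 0, A = [[−1, 1], [1, −1]], nonnegative normalized initial datum f^I (f_1^I + f_2^I = 1) and steady state f^∞ = (1/2, 1/2), then e_p(f(t)|f^∞) ≤ C_p e^{−4λ t} e_p(f^I|f^∞) for all t ≥ 0. -/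

import Mathlib

open Real Set


lemma psi_hasDeriv (p : ℝ) (hp1 : 1 ≤ p) (x : ℝ) :
    HasDerivAt (fun σ : ℝ => σ ^ p - 1 - p * (σ - 1)) (p * x ^ (p-1) - p) x := by
  have h1 := Real.hasDerivAt_rpow_const (x := x) (p := p) (Or.inr hp1)
  have h2 : HasDerivAt (fun σ : ℝ => p * (σ - 1)) p x := by
    simpa using ((hasDerivAt_id x).sub_const 1).const_mul p
  exact (h1.sub_const 1).sub h2

lemma part1 (p : ℝ) (hp : p ∈ Set.Ioo (2:ℝ) 3) (σ : ℝ) (hσ : 0 ≤ σ) :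
    σ ^ p - 1 - p * (σ - 1) ≤ σ ^ (3:ℕ) - 1 - 3 * (σ - 1) := by
  obtain ⟨hp2, hp3⟩ := hp
  set h : ℝ → ℝ := fun σ => (σ ^ (3:ℕ) - 1 - 3 * (σ - 1)) - (σ ^ p - 1 - p * (σ - 1)) with hh
  have hd : ∀ x : ℝ, HasDerivAt h ((3 * x ^ (2:ℕ) - 3) - (p * x ^ (p-1) - p)) x := by
    intro x
    have h3 : HasDerivAt (fun σ : ℝ => σ ^ (3:ℕ) - 1 - 3 * (σ - 1)) (3 * x ^ (2:ℕ) - 3) x := by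
      have := hasDerivAt_pow 3 x
      have h2 : HasDerivAt (fun σ : ℝ => 3 * (σ - 1)) 3 x := by
        simpa using ((hasDerivAt_id x).sub_const 1).const_mul (3:ℝ)
      exact ((this.sub_const 1).sub h2).congr_deriv (by norm_num)
    exact h3.sub (psi_hasDeriv p (by linarith) x)
  have hdiff : Differentiable ℝ h := fun x => (hd x).differentiableAt
  have hderiv : ∀ x : ℝ, deriv h x = (3 * x ^ (2:ℕ) - 3) - (p * x ^ (p-1) - p) :=
    fun x => (hd x).deriv
  have h1 : h 1 = 0 := by
    simp [hh, Real.one_rpow]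
  have key : 0 ≤ h σ := by
    rcases le_or_gt σ 1 with hle | hgt
    · -- antitone on [0,1]
      have hanti : AntitoneOn h (Icc 0 1) := by
        apply antitoneOn_of_deriv_nonpos (convex_Icc 0 1) hdiff.continuous.continuousOn
          hdiff.differentiableOn
        intro x hx
        rw [interior_Icc] at hx
        rw [hderiv]
        have hx0 : 0 < x := hx.1
        have hx1 : x < 1 := hx.2
        have e1 : x ^ (2:ℝ) ≤ x ^ (p - 1) :=
          Real.rpow_le_rpow_of_exponent_ge hx0 hx1.le (by linarith)
        have e2 : x ^ (p - 1) ≤ 1 := Real.rpow_le_one hx0.le hx1.le (by linarith)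
        have e3 : x ^ (2:ℝ) = x ^ (2:ℕ) := by
          rw [← Real.rpow_natCast x 2]; norm_num
        rw [e3] at e1
        nlinarith
      have := hanti ⟨hσ, hle⟩ (by constructor <;> norm_num) hle
      rwa [h1] at this
    · -- monotone on [1,∞)
      have hmono : MonotoneOn h (Ici 1) := by
        apply monotoneOn_of_deriv_nonneg (convex_Ici 1) hdiff.continuous.continuousOn
          hdiff.differentiableOn
        intro x hx
        rw [interior_Ici] at hx
        rw [hderiv]
        have hx1 : (1:ℝ) < x := hx
        have e1 : x ^ (p - 1) ≤ x ^ (2:ℝ) :=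
          Real.rpow_le_rpow_of_exponent_le hx1.le (by linarith)
        have e3 : x ^ (2:ℝ) = x ^ (2:ℕ) := by
          rw [← Real.rpow_natCast x 2]; norm_num
        rw [e3] at e1
        have hx2 : (1:ℝ) ≤ x^2 := by nlinarith
        nlinarith [mul_nonneg (by linarith : (0:ℝ) ≤ 3 - p) (by linarith : (0:ℝ) ≤ x^2 - 1),
          mul_nonneg (by linarith : (0:ℝ) ≤ p) (by linarith : (0:ℝ) ≤ x^2 - x^(p-1))]
      have := hmono self_mem_Ici (mem_Ici.2 hgt.le) hgt.le
      rwa [h1] at this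
  simp only [hh] at key
  linarith [key]

lemma convexOn_two_rpow : ConvexOn ℝ univ (fun x : ℝ => (2:ℝ) ^ x) := by
  have h := convexOn_exp.comp_affineMap ((AffineMap.lineMap (0:ℝ) (Real.log 2) : ℝ →ᵃ[ℝ] ℝ))
  simp only [Function.comp_def] at h
  have he : ((AffineMap.lineMap (0:ℝ) (Real.log 2) : ℝ →ᵃ[ℝ] ℝ)) ⁻¹' univ = univ := by simp
  rw [he] at h
  refine h.congr fun x _ => ?_
  rw [Real.rpow_def_of_pos (by norm_num)]
  simp [Function.comp, AffineMap.lineMap_apply, smul_eq_mul, mul_comm]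

lemma chord {f : ℝ → ℝ} (hf : ConvexOn ℝ univ f) {a b x : ℝ} (hab : a < b)
    (hx : x ∈ Icc a b) : f x ≤ ((b - x) * f a + (x - a) * f b) / (b - a) := by
  have h1 : (0:ℝ) < b - a := by linarith
  have hw1 : (0:ℝ) ≤ (b - x)/(b-a) := by
    apply div_nonneg _ h1.le; linarith [hx.2]
  have hw2 : (0:ℝ) ≤ (x - a)/(b-a) := by
    apply div_nonneg _ h1.le; linarith [hx.1]
  have hsum : (b - x)/(b-a) + (x - a)/(b-a) = 1 := by
    field_simp
    ring
  have := hf.2 (mem_univ a) (mem_univ b) hw1 hw2 hsum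
  have hx' : ((b - x)/(b-a)) • a + ((x - a)/(b-a)) • b = x := by
    simp only [smul_eq_mul]
    field_simp
    ring
  rw [hx'] at this
  simp only [smul_eq_mul] at this
  have heq : ((b - x) * f a + (x - a) * f b) / (b - a)
      = (b - x)/(b-a) * f a + (x - a)/(b-a) * f b := by ring
  rw [heq]
  exact this

lemma sqrt2_bounds : (1.414 : ℝ) < Real.sqrt 2 ∧ Real.sqrt 2 < 1.41422 := by
  have h2 : (Real.sqrt 2)^2 = 2 := Real.sq_sqrt (by norm_num)
  have h0 : 0 < Real.sqrt 2 := Real.sqrt_pos.2 (by norm_num)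
  constructor <;> nlinarith

lemma rpow_two' : (2:ℝ) ^ ((2:ℝ)) = 4 := by
  rw [show (2:ℝ) = ((2:ℕ):ℝ) from by norm_num, Real.rpow_natCast]; norm_num

lemma rpow_5half : (2:ℝ) ^ ((5:ℝ)/2) = 4 * Real.sqrt 2 := by
  have h : ((5:ℝ)/2) = (2:ℝ) + (1/2 : ℝ) := by norm_num
  rw [h, Real.rpow_add (by norm_num : (0:ℝ) < 2), ← Real.sqrt_eq_rpow, rpow_two']

lemma rpow_three' : (2:ℝ) ^ ((3:ℝ)) = 8 := by
  rw [show (3:ℝ) = ((3:ℕ):ℝ) from by norm_num, Real.rpow_natCast]; norm_num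

lemma ineqA {p : ℝ} (hp : p ∈ Icc (2:ℝ) 3) : (2:ℝ)^p ≤ 4*p - 4 := by
  have := chord convexOn_two_rpow (by norm_num : (2:ℝ) < 3) hp
  rw [rpow_two', rpow_three'] at this
  calc (2:ℝ)^p ≤ ((3 - p) * 4 + (p - 2) * 8) / (3 - 2) := this
    _ = 4*p - 4 := by ring

lemma ineqB {p : ℝ} (hp : p ∈ Icc (2:ℝ) 3) : 3*(2:ℝ)^p ≤ 2*p^2 + p + 3 := by
  obtain ⟨hs1, hs2⟩ := sqrt2_bounds
  have hsq : (Real.sqrt 2)^2 = 2 := Real.sq_sqrt (by norm_num)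
  obtain ⟨hpl, hpr⟩ := hp
  rcases le_or_gt p (5/2) with hle | hgt
  · have := chord convexOn_two_rpow (by norm_num : (2:ℝ) < 5/2) ⟨hpl, hle⟩
    rw [rpow_two', rpow_5half] at this
    have hb : (2:ℝ)^p ≤ ((5/2 - p) * 4 + (p - 2) * (4 * Real.sqrt 2)) / (5/2 - 2) := this
    have hb' : (2:ℝ)^p ≤ (20 - 8*p) + (8*p - 16)*Real.sqrt 2 := by
      have heq : ((5/2 - p) * 4 + (p - 2) * (4 * Real.sqrt 2)) / (5/2 - 2)
          = (20 - 8*p) + (8*p - 16)*Real.sqrt 2 := by ring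
      linarith [hb, heq.le, heq.ge]
    nlinarith [hb', sq_nonneg (4*(p-2) + (33 - 24*Real.sqrt 2))]
  · have := chord convexOn_two_rpow (by norm_num : (5:ℝ)/2 < 3) ⟨hgt.le, hpr⟩
    rw [rpow_three', rpow_5half] at this
    have hb : (2:ℝ)^p ≤ ((3 - p) * (4 * Real.sqrt 2) + (p - 5/2) * 8) / (3 - 5/2) := this
    have hb' : (2:ℝ)^p ≤ (24 - 8*p)*Real.sqrt 2 + 16*p - 40 := by
      have heq : ((3 - p) * (4 * Real.sqrt 2) + (p - 5/2) * 8) / (3 - 5/2)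
          = (24 - 8*p)*Real.sqrt 2 + 16*p - 40 := by ring
      linarith [hb, heq.le, heq.ge]
    nlinarith [hb', mul_nonneg (by linarith : (0:ℝ) ≤ 1 - (p - 2))
        (by nlinarith : (0:ℝ) ≤ (37 - 24*Real.sqrt 2)/2 - (p - 2))]

lemma part2 (p : ℝ) (hp2 : 2 < p) (hp3 : p < 3) (σ : ℝ) (hσ0 : 0 ≤ σ) (hσ2 : σ ≤ 2) :
    σ^(3:ℕ) - 1 - 3*(σ-1) ≤ (4/((2:ℝ)^p - 1 - p)) * (σ^p - 1 - p*(σ-1)) := by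
  have hD : 0 < (2:ℝ)^p - 1 - p := by
    have h4 : (4:ℝ) < 2^p := by
      have := Real.rpow_lt_rpow_of_exponent_lt (by norm_num : (1:ℝ) < 2) hp2
      rwa [rpow_two'] at this
    linarith
  set Cp := 4/((2:ℝ)^p - 1 - p) with hCp
  have hCpPos : 0 < Cp := by positivity
  set M := Cp * (p * (p-1)) with hM
  have hM6 : 6 ≤ M := by
    have hB := ineqB ⟨le_of_lt hp2, le_of_lt hp3⟩
    rw [hM, hCp, div_mul_eq_mul_div, le_div_iff₀ hD]
    nlinarith
  set g : ℝ → ℝ := fun x => Cp * (x^p - 1 - p*(x-1)) - (x^(3:ℕ) - 1 - 3*(x-1)) with hg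
  set g' : ℝ → ℝ := fun x => Cp * (p * x^(p-1) - p) - (3*x^(2:ℕ) - 3) with hg'
  have hgd : ∀ x, HasDerivAt g (g' x) x := by
    intro x
    have hcube : HasDerivAt (fun σ : ℝ => σ ^ (3:ℕ) - 1 - 3 * (σ - 1)) (3 * x ^ (2:ℕ) - 3) x := by
      have := hasDerivAt_pow 3 x
      have h2 : HasDerivAt (fun σ : ℝ => 3 * (σ - 1)) 3 x := by
        simpa using ((hasDerivAt_id x).sub_const 1).const_mul (3:ℝ)
      exact ((this.sub_const 1).sub h2).congr_deriv (by norm_num)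
    exact ((psi_hasDeriv p (by linarith) x).const_mul Cp).sub hcube
  have hgdiff : Differentiable ℝ g := fun x => (hgd x).differentiableAt
  have hderg : ∀ x, deriv g x = g' x := fun x => (hgd x).deriv
  have hgd' : ∀ x, HasDerivAt g' (Cp * (p * ((p-1) * x^(p-2))) - 6*x) x := by
    intro x
    have h1 : HasDerivAt (fun y : ℝ => y ^ (p-1)) ((p-1) * x^(p-1-1)) x :=
      Real.hasDerivAt_rpow_const (Or.inr (by linarith))
    have h1' : HasDerivAt (fun y : ℝ => p * y ^ (p-1) - p) (p * ((p-1) * x^(p-2))) x := by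
      have := (h1.const_mul p).sub_const p
      rw [show p - 1 - 1 = p - 2 by ring] at this; exact this
    have h2 : HasDerivAt (fun y : ℝ => 3*y^(2:ℕ) - 3) (6*x) x := by
      have := (hasDerivAt_pow 2 x).const_mul (3:ℝ)
      have := (this).sub_const (3:ℝ)
      exact this.congr_deriv (by rw [show (2:ℕ) - 1 = 1 from rfl, pow_one, Nat.cast_ofNat]; ring)
    exact (h1'.const_mul Cp).sub h2
  have hgdiff' : Differentiable ℝ g' := fun x => (hgd' x).differentiableAt
  have hderg' : ∀ x, deriv g' x = Cp * (p * ((p-1) * x^(p-2))) - 6*x :=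
    fun x => (hgd' x).deriv
  have hg'1 : g' 1 = 0 := by simp [hg', Real.one_rpow]
  have hg1 : g 1 = 0 := by simp [hg, Real.one_rpow]
  have hg2 : g 2 = 0 := by
    have : Cp * ((2:ℝ)^p - 1 - p) = 4 := by
      rw [hCp]; field_simp
    simp only [hg]
    norm_num
    linarith [this]
  -- second derivative signs
  have hpp_nonneg : ∀ x : ℝ, 0 ≤ x → 6 * x^((3:ℝ)-p) ≤ M → 0 ≤ deriv g' x := by
    intro x hx hPx
    rw [hderg' x]
    rcases eq_or_lt_of_le hx with h0 | h0
    · rw [← h0, Real.zero_rpow (by linarith : p - 2 ≠ 0)]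
      simp
    · have hxp : (0:ℝ) < x^(p-2) := Real.rpow_pos_of_pos h0 _
      have hmul := mul_le_mul_of_nonneg_right hPx hxp.le
      have hcomb : x^((3:ℝ)-p) * x^(p-2) = x := by
        rw [← Real.rpow_add h0]
        norm_num
      have hMx : M * x^(p-2) = Cp * (p * ((p-1) * x^(p-2))) := by rw [hM]; ring
      nlinarith [hmul, hcomb, hMx]
  have hpp_nonpos : ∀ x : ℝ, 0 < x → M ≤ 6 * x^((3:ℝ)-p) → deriv g' x ≤ 0 := by
    intro x h0 hPx
    rw [hderg' x]
    have hxp : (0:ℝ) < x^(p-2) := Real.rpow_pos_of_pos h0 _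
    have hmul := mul_le_mul_of_nonneg_right hPx hxp.le
    have hcomb : x^((3:ℝ)-p) * x^(p-2) = x := by
      rw [← Real.rpow_add h0]
      norm_num
    have hMx : M * x^(p-2) = Cp * (p * ((p-1) * x^(p-2))) := by rw [hM]; ring
    nlinarith [hmul, hcomb, hMx]
  have key : 0 ≤ g σ := by
    rcases le_or_gt σ 1 with hσ1 | hσ1
    · -- σ ∈ [0,1]
      have hmono' : MonotoneOn g' (Icc 0 1) := by
        apply monotoneOn_of_deriv_nonneg (convex_Icc 0 1) hgdiff'.continuous.continuousOn
          hgdiff'.differentiableOn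
        intro x hx
        rw [interior_Icc] at hx
        apply hpp_nonneg x hx.1.le
        have : x^((3:ℝ)-p) ≤ 1 := Real.rpow_le_one hx.1.le hx.2.le (by linarith)
        linarith
      have hganti : AntitoneOn g (Icc 0 1) := by
        apply antitoneOn_of_deriv_nonpos (convex_Icc 0 1) hgdiff.continuous.continuousOn
          hgdiff.differentiableOn
        intro x hx
        rw [interior_Icc] at hx
        rw [hderg x]
        have := hmono' ⟨hx.1.le, hx.2.le⟩ (right_mem_Icc.2 (by norm_num)) hx.2.le
        rw [hg'1] at this
        exact this
      have := hganti ⟨hσ0, hσ1⟩ (right_mem_Icc.2 (by norm_num)) hσ1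
      rwa [hg1] at this
    · -- σ ∈ (1,2]
      have hσ1' : 1 ≤ σ := hσ1.le
      have L1 : ∀ τ : ℝ, 1 ≤ τ → τ ≤ 2 → 6 * τ^((3:ℝ)-p) ≤ M → 0 ≤ g' τ := by
        intro τ hτ1 hτ2 hPτ
        have hmono' : MonotoneOn g' (Icc 1 τ) := by
          apply monotoneOn_of_deriv_nonneg (convex_Icc 1 τ) hgdiff'.continuous.continuousOn
            hgdiff'.differentiableOn
          intro y hy
          rw [interior_Icc] at hy
          apply hpp_nonneg y (by linarith [hy.1])
          have : y^((3:ℝ)-p) ≤ τ^((3:ℝ)-p) :=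
            Real.rpow_le_rpow (by linarith [hy.1]) hy.2.le (by linarith)
          linarith
        have := hmono' (left_mem_Icc.2 hτ1) (right_mem_Icc.2 hτ1) hτ1
        rw [hg'1] at this
        exact this
      have L2 : ∀ x : ℝ, 1 ≤ x → x ≤ 2 → M ≤ 6 * x^((3:ℝ)-p) → AntitoneOn g' (Icc x 2) := by
        intro x hx1 hx2 hPx
        apply antitoneOn_of_deriv_nonpos (convex_Icc x 2) hgdiff'.continuous.continuousOn
          hgdiff'.differentiableOn
        intro y hy
        rw [interior_Icc] at hy
        apply hpp_nonpos y (by linarith [hy.1])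
        have : x^((3:ℝ)-p) ≤ y^((3:ℝ)-p) :=
          Real.rpow_le_rpow (by linarith) hy.1.le (by linarith)
        linarith
      by_cases hPσ : 6 * σ^((3:ℝ)-p) ≤ M
      · have hmono : MonotoneOn g (Icc 1 σ) := by
          apply monotoneOn_of_deriv_nonneg (convex_Icc 1 σ) hgdiff.continuous.continuousOn
            hgdiff.differentiableOn
          intro τ hτ
          rw [interior_Icc] at hτ
          rw [hderg τ]
          apply L1 τ hτ.1.le (by linarith [hτ.2])
          have : τ^((3:ℝ)-p) ≤ σ^((3:ℝ)-p) :=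
            Real.rpow_le_rpow (by linarith [hτ.1]) hτ.2.le (by linarith)
          linarith
        have := hmono (left_mem_Icc.2 hσ1') (right_mem_Icc.2 hσ1') hσ1'
        rwa [hg1] at this
      · push_neg at hPσ
        have hA := L2 σ hσ1' hσ2 hPσ.le
        rcases le_or_gt (g' σ) 0 with hgσ | hgσ
        · have hanti : AntitoneOn g (Icc σ 2) := by
            apply antitoneOn_of_deriv_nonpos (convex_Icc σ 2) hgdiff.continuous.continuousOn
              hgdiff.differentiableOn
            intro τ hτ
            rw [interior_Icc] at hτ
            rw [hderg τ]
            have := hA (left_mem_Icc.2 hσ2) ⟨hτ.1.le, hτ.2.le⟩ hτ.1.le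
            linarith
          have := hanti (left_mem_Icc.2 hσ2) (right_mem_Icc.2 hσ2) hσ2
          rw [hg2] at this
          linarith
        · have hmono : MonotoneOn g (Icc 1 σ) := by
            apply monotoneOn_of_deriv_nonneg (convex_Icc 1 σ) hgdiff.continuous.continuousOn
              hgdiff.differentiableOn
            intro τ hτ
            rw [interior_Icc] at hτ
            rw [hderg τ]
            by_cases hPτ : 6 * τ^((3:ℝ)-p) ≤ M
            · exact L1 τ hτ.1.le (by linarith [hτ.2]) hPτ
            · push_neg at hPτ
              have hB := L2 τ hτ.1.le (by linarith [hτ.2]) hPτ.le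
              have := hB (left_mem_Icc.2 (by linarith [hτ.2])) ⟨hτ.2.le, hσ2⟩ hτ.2.le
              linarith
          have := hmono (left_mem_Icc.2 hσ1') (right_mem_Icc.2 hσ1') hσ1'
          rwa [hg1] at this
  simp only [hg] at key
  linarith

lemma part3 (p : ℝ) (hp2 : 2 < p) (hp3 : p < 3)
    (lam : ℝ) (hlam : 0 < lam)
    (fI : ℝ × ℝ) (h1 : 0 ≤ fI.1) (h2 : 0 ≤ fI.2) (hsum : fI.1 + fI.2 = 1)
    (f : ℝ → ℝ × ℝ) (hf0 : f 0 = fI)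
    (hf : ∀ t : ℝ, HasDerivAt f (lam • (-(f t).1 + (f t).2, (f t).1 - (f t).2)) t)
    (t : ℝ) (ht : 0 ≤ t) :
    ((2*(f t).1)^p - 1 - p*(2*(f t).1-1)) * (1/2) + ((2*(f t).2)^p - 1 - p*(2*(f t).2-1)) * (1/2) ≤
      (4/((2:ℝ)^p - 1 - p)) * Real.exp (-(4 * lam) * t) *
        (((2*fI.1)^p - 1 - p*(2*fI.1-1)) * (1/2) + ((2*fI.2)^p - 1 - p*(2*fI.2-1)) * (1/2)) := by
  -- component derivatives
  have hc1 : ∀ s : ℝ, HasDerivAt (fun u => (f u).1) (lam * (-(f s).1 + (f s).2)) s := by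
    intro s
    have := (hf s).hasFDerivAt.fst.hasDerivAt
    simpa using this
  have hc2 : ∀ s : ℝ, HasDerivAt (fun u => (f u).2) (lam * ((f s).1 - (f s).2)) s := by
    intro s
    have := (hf s).hasFDerivAt.snd.hasDerivAt
    simpa using this
  -- sum is constant
  have hS : ∀ s : ℝ, (f s).1 + (f s).2 = 1 := by
    have hd : ∀ s : ℝ, HasDerivAt (fun u => (f u).1 + (f u).2) 0 s := by
      intro s
      have := (hc1 s).add (hc2 s)
      exact this.congr_deriv (by ring)
    have hconst : ∀ s : ℝ, (fun u => (f u).1 + (f u).2) s = (fun u => (f u).1 + (f u).2) 0 :=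
      fun s => is_const_of_deriv_eq_zero (fun x => (hd x).differentiableAt)
        (fun x => (hd x).deriv) s 0
    intro s
    have := hconst s
    simp only at this
    rw [this, hf0, hsum]
  -- difference decays
  set c : ℝ := fI.1 - fI.2 with hc
  have hW : ∀ s : ℝ, ((f s).1 - (f s).2) * Real.exp (2*lam*s) = c := by
    have hd : ∀ s : ℝ, HasDerivAt (fun u => ((f u).1 - (f u).2) * Real.exp (2*lam*u)) 0 s := by
      intro s
      have hexp : HasDerivAt (fun u : ℝ => Real.exp (2*lam*u)) (Real.exp (2*lam*s) * (2*lam)) s := by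
        have : HasDerivAt (fun u : ℝ => 2*lam*u) (2*lam) s := by
          simpa using (hasDerivAt_id s).const_mul (2*lam)
        exact this.exp
      have := ((hc1 s).sub (hc2 s)).mul hexp
      exact this.congr_deriv (by simp only [Pi.sub_apply]; ring)
    have hconst : ∀ s : ℝ,
        (fun u => ((f u).1 - (f u).2) * Real.exp (2*lam*u)) s
          = (fun u => ((f u).1 - (f u).2) * Real.exp (2*lam*u)) 0 :=
      fun s => is_const_of_deriv_eq_zero (fun x => (hd x).differentiableAt)
        (fun x => (hd x).deriv) s 0
    intro s
    have := hconst s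
    simp only at this
    rw [this, hf0]
    simp [hc]
  have hdiff : ∀ s : ℝ, (f s).1 - (f s).2 = c * Real.exp (-(2*lam*s)) := by
    intro s
    have h := hW s
    have hE : Real.exp (2*lam*s) ≠ 0 := (Real.exp_pos _).ne'
    rw [Real.exp_neg]
    field_simp
    linarith [h]
  -- set s := c * exp(-(2 lam t))
  set E : ℝ := Real.exp (-(2*lam*t)) with hE
  set s : ℝ := c * E with hs
  have hEpos : 0 < E := Real.exp_pos _
  have hE1 : E ≤ 1 := Real.exp_le_one_iff.2 (by nlinarith)
  have hc1' : -1 ≤ c := by simp only [hc]; linarith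
  have hc2' : c ≤ 1 := by simp only [hc]; linarith
  have hs1 : -1 ≤ s := by nlinarith
  have hs2 : s ≤ 1 := by nlinarith
  have hft1 : 2*(f t).1 = 1 + s := by
    have := hS t
    have := hdiff t
    simp only [hs, hE]
    linarith [hS t, hdiff t]
  have hft2 : 2*(f t).2 = 1 - s := by
    linarith [hS t, hdiff t]
  have hfI1 : 2*fI.1 = 1 + c := by simp only [hc]; linarith
  have hfI2 : 2*fI.2 = 1 - c := by simp only [hc]; linarith
  rw [hft1, hft2, hfI1, hfI2]
  -- entropy chain
  have hA1 : (1+s)^p - 1 - p*((1+s)-1) ≤ (1+s)^(3:ℕ) - 1 - 3*((1+s)-1) :=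
    part1 p ⟨hp2, hp3⟩ (1+s) (by linarith)
  have hA2 : (1-s)^p - 1 - p*((1-s)-1) ≤ (1-s)^(3:ℕ) - 1 - 3*((1-s)-1) :=
    part1 p ⟨hp2, hp3⟩ (1-s) (by linarith)
  have hB1 : (1+c)^(3:ℕ) - 1 - 3*((1+c)-1) ≤ (4/((2:ℝ)^p - 1 - p)) * ((1+c)^p - 1 - p*((1+c)-1)) :=
    part2 p hp2 hp3 (1+c) (by linarith) (by linarith)
  have hB2 : (1-c)^(3:ℕ) - 1 - 3*((1-c)-1) ≤ (4/((2:ℝ)^p - 1 - p)) * ((1-c)^p - 1 - p*((1-c)-1)) :=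
    part2 p hp2 hp3 (1-c) (by linarith) (by linarith)
  have hcube_s : ((1+s)^(3:ℕ) - 1 - 3*((1+s)-1)) + ((1-s)^(3:ℕ) - 1 - 3*((1-s)-1)) = 6*s^2 := by
    ring
  have hcube_c : ((1+c)^(3:ℕ) - 1 - 3*((1+c)-1)) + ((1-c)^(3:ℕ) - 1 - 3*((1-c)-1)) = 6*c^2 := by
    ring
  have hEE : E^2 = Real.exp (-(4*lam)*t) := by
    rw [hE, sq, ← Real.exp_add]
    congr 1
    ring
  have hs2E : s^2 = c^2 * Real.exp (-(4*lam)*t) := by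
    rw [hs, ← hEE]; ring
  have hExp4 : 0 < Real.exp (-(4*lam)*t) := Real.exp_pos _
  calc ((1+s)^p - 1 - p*((1+s)-1)) * (1/2) + ((1-s)^p - 1 - p*((1-s)-1)) * (1/2)
      ≤ (6*s^2) * (1/2) := by
        rw [← hcube_s]; linarith
    _ = Real.exp (-(4*lam)*t) * ((6*c^2) * (1/2)) := by rw [hs2E]; ring
    _ ≤ Real.exp (-(4*lam)*t) *
        ((4/((2:ℝ)^p - 1 - p)) * (((1+c)^p - 1 - p*((1+c)-1)) * (1/2)
          + ((1-c)^p - 1 - p*((1-c)-1)) * (1/2))) := by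
        apply mul_le_mul_of_nonneg_left _ hExp4.le
        rw [← hcube_c]
        linarith
    _ = (4/((2:ℝ)^p - 1 - p)) * Real.exp (-(4*lam)*t) *
        (((1+c)^p - 1 - p*((1+c)-1)) * (1/2) + ((1-c)^p - 1 - p*((1-c)-1)) * (1/2)) := by
        ring

/-- for `p ∈ (2,3)` and `C_p = 4/(2^p - 1 - p)`:
(1) `ψ_p ≤ ψ_3` on `[0,∞)`; (2) `ψ_3 ≤ C_p ψ_p` on `[0,2]`; consequently the
relative entropy `e_p` decays along the two-velocity BGK ODE at the optimal rate
`4λ` with multiplicative constant `C_p`. -/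
theorem stmt_5
    (p : ℝ) (hp : p ∈ Set.Ioo (2:ℝ) 3)
    (ψp ψ3 : ℝ → ℝ)
    (hψp : ∀ σ : ℝ, ψp σ = σ ^ p - 1 - p * (σ - 1))
    (hψ3 : ∀ σ : ℝ, ψ3 σ = σ ^ (3:ℕ) - 1 - 3 * (σ - 1))
    (Cp : ℝ) (hCp : Cp = 4 / ((2:ℝ) ^ p - 1 - p)) :
    (∀ σ : ℝ, 0 ≤ σ → ψp σ ≤ ψ3 σ) ∧
    (∀ σ ∈ Set.Icc (0:ℝ) 2, ψ3 σ ≤ Cp * ψp σ) ∧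
    (∀ lam : ℝ, 0 < lam →
      ∀ fI : ℝ × ℝ, 0 ≤ fI.1 → 0 ≤ fI.2 → fI.1 + fI.2 = 1 →
      ∀ f : ℝ → ℝ × ℝ, f 0 = fI →
      (∀ t : ℝ, HasDerivAt f (lam • (-(f t).1 + (f t).2, (f t).1 - (f t).2)) t) →
      ∀ t : ℝ, 0 ≤ t →
        ψp (2 * (f t).1) * (1/2) + ψp (2 * (f t).2) * (1/2) ≤
          Cp * Real.exp (-(4 * lam) * t) *
            (ψp (2 * fI.1) * (1/2) + ψp (2 * fI.2) * (1/2))) := by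
  obtain ⟨hp2, hp3⟩ := hp
  refine ⟨fun σ hσ => ?_, fun σ hσ => ?_, fun lam hlam fI h1 h2 hsum f hf0 hf t ht => ?_⟩
  · rw [hψp, hψ3]; exact part1 p ⟨hp2, hp3⟩ σ hσ
  · rw [hψp, hψ3, hCp]; exact part2 p hp2 hp3 σ hσ.1 hσ.2
  · simp only [hψp, hCp]
    exact part3 p hp2 hp3 lam hlam fI h1 h2 hsum f hf0 hf t ht
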